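/- arXiv:2601.16757 — 6 statements merged into one kernel-verified Lean document; each statement's English description precedes it below -/
import Mathlib

section
/- Fix positive integers s and A, and let x, n be positive integers with x dividing A^n·(n!)^s. Let β be the maximal exponent in the prime factorization of A (β = 0 if A = 1). Then for every positive integer a, x ≤ (a·ω(x)+1)^{n·ω(x)·(β+s)} · (A·n^s)^{n·(β·ω(x) + s/a)}. -/
/-- `K x` is the maximal exponent in the prime factorization of `x`. -/
def maxExponent (x : ℕ) : ℕ := x.primeFactors.sup x.factorization

/-- If `x ∣ A^n·(n!)^s` and `β` is the maximal exponent in the prime factorization of `A`,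
then for every positive integer `a`,
`x ≤ (a·ω(x)+1)^{n·ω(x)·(β+s)} · (A·n^s)^{n·(β·ω(x)+s/a)}`. -/
theorem le_of_dvd_pow_mul_factorial_pow'
    (s A : ℕ) (hs : 0 < s) (hA : 0 < A) (x n : ℕ) (hx : 0 < x) (hn : 0 < n)
    (hdvd : x ∣ A ^ n * (Nat.factorial n) ^ s)
    (β : ℕ) (hβ : β = maxExponent A) (a : ℕ) (ha : 0 < a) :
    (x : ℝ) ≤
      ((a * x.primeFactors.card + 1 : ℕ) : ℝ) ^ (n * x.primeFactors.card * (β + s)) *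
        ((A * n ^ s : ℕ) : ℝ) ^
          ((n : ℝ) * ((β : ℝ) * (x.primeFactors.card : ℝ) + (s : ℝ) / (a : ℝ))) := by
  have hx0 : x ≠ 0 := hx.ne'
  set S := x.primeFactors with hSdef
  set ω := S.card with hωdef
  set C : ℝ := ((A * n ^ s : ℕ) : ℝ) with hCdef
  have hC1 : (1:ℝ) ≤ C := by
    have h : (1:ℕ) ≤ A * n ^ s := Nat.one_le_iff_ne_zero.mpr (by positivity)
    rw [hCdef]
    exact_mod_cast h
  have hC0 : (0:ℝ) ≤ C := le_trans zero_le_one hC1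
  -- case ω = 0
  rcases Nat.eq_zero_or_pos ω with hω0 | hωpos
  · have hS : S = ∅ := Finset.card_eq_zero.mp hω0
    have hx1 : x = 1 := by
      rcases Nat.primeFactors_eq_empty.mp hS with h | h
      · exact absurd h hx0
      · exact h
    rw [hx1, hω0]
    simp only [Nat.cast_one, Nat.mul_zero, Nat.zero_mul, mul_zero, zero_mul, pow_zero,
      Nat.cast_zero, zero_add, one_mul]
    refine Real.one_le_rpow hC1 (by positivity)
  -- prime bound
  have hple : ∀ p ∈ S, p ≤ A * n ^ s := by
    intro p hp
    have hpp : p.Prime := Nat.prime_of_mem_primeFactors hp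
    have hpd : p ∣ A ^ n * (Nat.factorial n) ^ s :=
      (Nat.dvd_of_mem_primeFactors hp).trans hdvd
    rcases (Nat.Prime.dvd_mul hpp).mp hpd with h | h
    · have hpA : p ∣ A := hpp.dvd_of_dvd_pow h
      calc p ≤ A := Nat.le_of_dvd hA hpA
        _ ≤ A * n ^ s := Nat.le_mul_of_pos_right _ (by positivity)
    · have hpn : p ≤ n := (Nat.Prime.dvd_factorial hpp).mp (hpp.dvd_of_dvd_pow h)
      calc p ≤ n := hpn
        _ ≤ n ^ s := Nat.le_self_pow hs.ne' n
        _ ≤ A * n ^ s := Nat.le_mul_of_pos_left _ hA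
  -- A's exponents bounded by β
  have hAfac : ∀ p : ℕ, A.factorization p ≤ β := by
    intro p
    rw [hβ]
    by_cases h : p ∈ A.primeFactors
    · exact Finset.le_sup h
    · have : A.factorization p = 0 := by
        rwa [← Nat.support_factorization, Finsupp.notMem_support_iff] at h
      rw [this]; exact Nat.zero_le _
  -- key exponent bound
  have hkey : ∀ p ∈ S, x.factorization p ≤ n * β + s * ((Nat.factorial n).factorization p) := by
    intro p hp
    have h1 : x.factorization p ≤ (A ^ n * (Nat.factorial n) ^ s).factorization p :=
      (Nat.factorization_le_iff_dvd hx0 (by positivity)).mpr hdvd p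
    rw [Nat.factorization_mul (by positivity) (by positivity), Nat.factorization_pow,
      Nat.factorization_pow] at h1
    simp only [Finsupp.coe_add, Pi.add_apply, Finsupp.coe_smul, Pi.smul_apply,
      smul_eq_mul] at h1
    refine h1.trans ?_
    gcongr
    exact hAfac p
  -- Legendre bound
  have hleg : ∀ p ∈ S, (p - 1) * ((Nat.factorial n).factorization p) ≤ n := by
    intro p hp
    have hpp : p.Prime := Nat.prime_of_mem_primeFactors hp
    have : Fact p.Prime := ⟨hpp⟩
    rw [Nat.factorization_def _ hpp, sub_one_mul_padicValNat_factorial]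
    exact Nat.sub_le _ _
  -- split
  set S₁ := S.filter (fun p => p ≤ a * ω + 1) with hS₁def
  set S₂ := S.filter (fun p => ¬ p ≤ a * ω + 1) with hS₂def
  have hxprod : x = (∏ p ∈ S₁, p ^ x.factorization p) * (∏ p ∈ S₂, p ^ x.factorization p) := by
    rw [hS₁def, hS₂def, Finset.prod_filter_mul_prod_filter_not]
    rw [hSdef, ← Nat.support_factorization]
    exact (Nat.factorization_prod_pow_eq_self hx0).symm
  -- bound for S₁ in ℕ
  have hbound1 : (∏ p ∈ S₁, p ^ x.factorization p) ≤ (a * ω + 1) ^ (n * ω * (β + s)) := by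
    have hstep : ∀ p ∈ S₁, p ^ x.factorization p ≤ (a * ω + 1) ^ (n * (β + s)) := by
      intro p hp
      obtain ⟨hpS, hple'⟩ := Finset.mem_filter.mp hp
      have hf : (Nat.factorial n).factorization p ≤ n := by
        have := hleg p hpS
        have hp2 : 2 ≤ p := (Nat.prime_of_mem_primeFactors hpS).two_le
        calc (Nat.factorial n).factorization p
            ≤ (p - 1) * ((Nat.factorial n).factorization p) :=
              Nat.le_mul_of_pos_left _ (by omega)
          _ ≤ n := this
      have hv : x.factorization p ≤ n * (β + s) := by
        have := hkey p hpS
        have : x.factorization p ≤ n * β + s * n := this.trans (by gcongr)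
        nlinarith
      calc p ^ x.factorization p ≤ (a * ω + 1) ^ x.factorization p :=
            Nat.pow_le_pow_left hple' _
        _ ≤ (a * ω + 1) ^ (n * (β + s)) := Nat.pow_le_pow_right (by omega) hv
    calc (∏ p ∈ S₁, p ^ x.factorization p)
        ≤ ∏ _p ∈ S₁, (a * ω + 1) ^ (n * (β + s)) := Finset.prod_le_prod' hstep
      _ = ((a * ω + 1) ^ (n * (β + s))) ^ S₁.card := Finset.prod_const _
      _ = (a * ω + 1) ^ (n * (β + s) * S₁.card) := by rw [← pow_mul]
      _ ≤ (a * ω + 1) ^ (n * ω * (β + s)) := by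
          apply Nat.pow_le_pow_right (by omega)
          have hc : S₁.card ≤ ω := by
            rw [hωdef]; exact Finset.card_le_card (Finset.filter_subset _ _)
          calc n * (β + s) * S₁.card ≤ n * (β + s) * ω := by gcongr
            _ = n * ω * (β + s) := by ring
  -- bound for S₂ in ℝ
  set E : ℝ := (n : ℝ) * β + (s : ℝ) * n / ((a : ℝ) * ω) with hEdef
  have haω : (0:ℝ) < (a:ℝ) * (ω:ℝ) := by
    have : (0:ℕ) < a * ω := Nat.mul_pos ha hωpos
    exact_mod_cast this
  have hE0 : 0 ≤ E := by
    rw [hEdef]; exact add_nonneg (mul_nonneg (Nat.cast_nonneg _) (Nat.cast_nonneg _)) (div_nonneg (mul_nonneg (Nat.cast_nonneg _) (Nat.cast_nonneg _)) haω.le)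
  have hbound2 : ((∏ p ∈ S₂, p ^ x.factorization p : ℕ) : ℝ) ≤ C ^ (E * S₂.card) := by
    push_cast
    have hstep : ∀ p ∈ S₂, ((p:ℝ)) ^ (x.factorization p : ℕ) ≤ C ^ E := by
      intro p hp
      obtain ⟨hpS, hpgt⟩ := Finset.mem_filter.mp hp
      have hpgt' : a * ω + 1 < p := lt_of_not_ge hpgt
      have hp1 : (1:ℝ) ≤ (p:ℝ) := by
        have h2 : 1 ≤ p := (Nat.prime_of_mem_primeFactors hpS).one_lt.le
        exact_mod_cast h2
      -- real exponent bound
      have hfreal : ((Nat.factorial n).factorization p : ℝ) ≤ (n:ℝ) / ((a:ℝ) * ω) := by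
        rw [le_div_iff₀ haω]
        have h1 : a * ω * ((Nat.factorial n).factorization p) ≤ n := by
          refine le_trans ?_ (hleg p hpS)
          gcongr
          omega
        calc ((Nat.factorial n).factorization p : ℝ) * ((a:ℝ) * ω)
            = ((a * ω * ((Nat.factorial n).factorization p) : ℕ) : ℝ) := by push_cast; ring
          _ ≤ (n:ℝ) := by exact_mod_cast h1
      have hvE : (x.factorization p : ℝ) ≤ E := by
        have h1 : (x.factorization p : ℝ) ≤ (n:ℝ) * β + (s:ℝ) * ((Nat.factorial n).factorization p) := by
          have := hkey p hpS
          calc (x.factorization p : ℝ) ≤ ((n * β + s * ((Nat.factorial n).factorization p) : ℕ) : ℝ) := by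
                exact_mod_cast this
            _ = (n:ℝ) * β + (s:ℝ) * ((Nat.factorial n).factorization p) := by push_cast; ring
        refine h1.trans ?_
        rw [hEdef, mul_div_assoc]
        exact add_le_add_right (mul_le_mul_of_nonneg_left hfreal (Nat.cast_nonneg s)) _
      calc ((p:ℝ)) ^ (x.factorization p : ℕ)
          = (p:ℝ) ^ ((x.factorization p : ℕ) : ℝ) := (Real.rpow_natCast _ _).symm
        _ ≤ (p:ℝ) ^ E := Real.rpow_le_rpow_of_exponent_le hp1 hvE
        _ ≤ C ^ E := by
            apply Real.rpow_le_rpow (by positivity) _ hE0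
            rw [hCdef]
            exact_mod_cast hple p hpS
    calc (∏ p ∈ S₂, ((p:ℝ)) ^ (x.factorization p : ℕ))
        ≤ ∏ _p ∈ S₂, C ^ E := Finset.prod_le_prod (fun i _ => by positivity) hstep
      _ = (C ^ E) ^ (S₂.card : ℕ) := Finset.prod_const _
      _ = C ^ (E * S₂.card) := by
          rw [← Real.rpow_natCast (C ^ E), ← Real.rpow_mul hC0]
  -- combine
  have hE2 : E * S₂.card ≤ (n : ℝ) * ((β : ℝ) * (ω : ℝ) + (s : ℝ) / (a : ℝ)) := by
    have hc : (S₂.card : ℝ) ≤ (ω : ℝ) := by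
      have : S₂.card ≤ ω := by
        rw [hωdef]; exact Finset.card_le_card (Finset.filter_subset _ _)
      exact_mod_cast this
    have hc0 : (0:ℝ) ≤ (S₂.card : ℝ) := Nat.cast_nonneg _
    have ha0 : (0:ℝ) < (a:ℝ) := by exact_mod_cast ha
    have hω0' : (0:ℝ) < (ω:ℝ) := by exact_mod_cast hωpos
    rw [hEdef]
    rw [add_mul, mul_add]
    gcongr ?_ + ?_
    · calc (n:ℝ) * β * S₂.card ≤ (n:ℝ) * β * ω := by
            have : (0:ℝ) ≤ (n:ℝ) * β := by positivity
            exact mul_le_mul_of_nonneg_left hc this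
        _ = (n:ℝ) * ((β:ℝ) * ω) := by ring
    · rw [div_mul_eq_mul_div, div_le_iff₀ haω]
      have : (n:ℝ) * ((s:ℝ) / a) * ((a:ℝ) * ω) = (s:ℝ) * n * ω := by
        field_simp
      rw [this]
      calc (s:ℝ) * n * S₂.card ≤ (s:ℝ) * n * ω := by
            have : (0:ℝ) ≤ (s:ℝ) * n := by positivity
            exact mul_le_mul_of_nonneg_left hc this
        _ = (s:ℝ) * n * ω := rfl
  calc (x:ℝ) = ((∏ p ∈ S₁, p ^ x.factorization p : ℕ) : ℝ) *
        ((∏ p ∈ S₂, p ^ x.factorization p : ℕ) : ℝ) := by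
        rw [← Nat.cast_mul, ← hxprod]
    _ ≤ (((a * ω + 1) ^ (n * ω * (β + s)) : ℕ) : ℝ) * (C ^ (E * S₂.card)) := by
        apply mul_le_mul _ hbound2 (Nat.cast_nonneg _) (Nat.cast_nonneg _)
        exact_mod_cast hbound1
    _ ≤ (((a * ω + 1) : ℕ) : ℝ) ^ (n * ω * (β + s)) *
        C ^ ((n : ℝ) * ((β : ℝ) * (ω : ℝ) + (s : ℝ) / (a : ℝ))) := by
        rw [Nat.cast_pow]
        exact mul_le_mul_of_nonneg_left (Real.rpow_le_rpow_of_exponent_le hC1 hE2)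
          (pow_nonneg (Nat.cast_nonneg _) _)
end

section
/- Fix a positive integer s, and let x, n be positive integers with n ≥ 2 and x dividing (n!)^s. Then for every positive integer a, x ≤ (a·ω(x)+1)^{n·ω(x)·s} · n^{s²·n/a}. -/
/-- If `x ∣ (n!)^s` with `n ≥ 2`, then for every positive integer `a`,
`x ≤ (a·ω(x)+1)^{n·ω(x)·s} · n^{s²·n/a}`. -/
theorem le_of_dvd_factorial_pow
    (s : ℕ) (hs : 0 < s) (x n : ℕ) (hx : 0 < x) (hn : 2 ≤ n)
    (hdvd : x ∣ (Nat.factorial n) ^ s) (a : ℕ) (ha : 0 < a) :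
    (x : ℝ) ≤
      ((a * x.primeFactors.card + 1 : ℕ) : ℝ) ^ (n * x.primeFactors.card * s) *
        (n : ℝ) ^ ((s : ℝ) ^ 2 * (n : ℝ) / (a : ℝ)) := by
  have hx' : x ≠ 0 := hx.ne'
  set ω := x.primeFactors.card with hω
  set T := a * ω + 1 with hT
  have hT1 : (1 : ℝ) ≤ (T : ℝ) := by exact_mod_cast Nat.le_add_left 1 (a * ω)
  have hn1 : (1 : ℝ) ≤ (n : ℝ) := by exact_mod_cast hn.trans' one_le_two
  have hfacle : x.factorization ≤ ((Nat.factorial n) ^ s).factorization :=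
    (Nat.factorization_le_iff_dvd hx' (by positivity)).2 hdvd
  have hleg : ∀ p : ℕ, p.Prime → (p - 1) * (Nat.factorial n).factorization p ≤ n := by
    intro p hpp
    haveI : Fact p.Prime := ⟨hpp⟩
    rw [Nat.factorization_def _ hpp, sub_one_mul_padicValNat_factorial]
    exact Nat.sub_le _ _
  -- per-prime facts, in ℝ
  have key : ∀ p ∈ x.primeFactors, 2 ≤ (p : ℝ) ∧ (p : ℝ) ≤ n ∧
      ((p : ℝ) - 1) * (x.factorization p : ℝ) ≤ (s : ℝ) * n := by
    intro p hp
    have hpp : p.Prime := Nat.prime_of_mem_primeFactors hp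
    have hpn : p ∣ Nat.factorial n :=
      hpp.dvd_of_dvd_pow ((Nat.dvd_of_mem_primeFactors hp).trans hdvd)
    have hxle : x.factorization p ≤ s * (Nat.factorial n).factorization p := by
      have := hfacle p
      rwa [Nat.factorization_pow, Finsupp.smul_apply, smul_eq_mul] at this
    have h1 : (p - 1) * x.factorization p ≤ s * n := by
      calc (p - 1) * x.factorization p ≤ (p - 1) * (s * (Nat.factorial n).factorization p) :=
            Nat.mul_le_mul_left _ hxle
        _ = s * ((p - 1) * (Nat.factorial n).factorization p) := by ring
        _ ≤ s * n := Nat.mul_le_mul_left _ (hleg p hpp)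
    refine ⟨by exact_mod_cast hpp.two_le, by exact_mod_cast (hpp.dvd_factorial).1 hpn, ?_⟩
    have hcast : ((p : ℝ) - 1) = ((p - 1 : ℕ) : ℝ) := by
      rw [Nat.cast_sub hpp.one_lt.le]; simp
    rw [hcast]
    exact_mod_cast h1
  -- small exponent bound: x.factorization p ≤ s * n for p prime factor
  have hexp : ∀ p ∈ x.primeFactors, (x.factorization p : ℝ) ≤ (s : ℝ) * n := by
    intro p hp
    obtain ⟨h2, _, h3⟩ := key p hp
    nlinarith [Nat.cast_nonneg (α := ℝ) (x.factorization p)]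
  -- product decomposition
  have hxeq : (x : ℝ) = ∏ p ∈ x.primeFactors, (p : ℝ) ^ (x.factorization p) := by
    conv_lhs => rw [← Nat.factorization_prod_pow_eq_self hx',
      Nat.prod_factorization_eq_prod_primeFactors]
    push_cast
    rfl
  set S := x.primeFactors.filter (fun p => p ≤ T) with hSdef
  set L := x.primeFactors.filter (fun p => ¬ p ≤ T) with hLdef
  have hsplit : (x : ℝ) = (∏ p ∈ S, (p : ℝ) ^ x.factorization p) *
      ∏ p ∈ L, (p : ℝ) ^ x.factorization p := by
    rw [hxeq, ← Finset.prod_filter_mul_prod_filter_not x.primeFactors (fun p => p ≤ T)]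
  -- bound the small-prime part
  have hSbound : (∏ p ∈ S, (p : ℝ) ^ x.factorization p) ≤ (T : ℝ) ^ (n * ω * s) := by
    have h1 : (∏ p ∈ S, (p : ℝ) ^ x.factorization p) ≤ ∏ _p ∈ S, (T : ℝ) ^ (s * n) := by
      refine Finset.prod_le_prod (fun p _ => by positivity) (fun p hp => ?_)
      have hpmem := Finset.mem_filter.1 hp
      obtain ⟨h2, _, _⟩ := key p hpmem.1
      have hpT : (p : ℝ) ≤ T := by exact_mod_cast hpmem.2
      have hf : x.factorization p ≤ s * n := by
        have := hexp p hpmem.1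
        exact_mod_cast this
      calc (p : ℝ) ^ x.factorization p ≤ (T : ℝ) ^ x.factorization p :=
            pow_le_pow_left₀ (by linarith) hpT _
        _ ≤ (T : ℝ) ^ (s * n) := pow_le_pow_right₀ hT1 hf
    rw [Finset.prod_const] at h1
    refine h1.trans ?_
    rw [← pow_mul]
    refine pow_le_pow_right₀ hT1 ?_
    have hcard : S.card ≤ ω := by
      rw [hω]; exact Finset.card_le_card (Finset.filter_subset _ _)
    calc s * n * S.card ≤ s * n * ω := Nat.mul_le_mul_left _ hcard
      _ = n * ω * s := by ring
  -- bound the large-prime part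
  have hLbound : (∏ p ∈ L, (p : ℝ) ^ x.factorization p) ≤
      (n : ℝ) ^ ((s : ℝ) ^ 2 * (n : ℝ) / (a : ℝ)) := by
    have h1 : (∏ p ∈ L, (p : ℝ) ^ x.factorization p) ≤
        ∏ p ∈ L, (n : ℝ) ^ x.factorization p := by
      refine Finset.prod_le_prod (fun p _ => by positivity) (fun p hp => ?_)
      have hpmem := Finset.mem_filter.1 hp
      obtain ⟨h2, hpn, _⟩ := key p hpmem.1
      exact pow_le_pow_left₀ (by linarith) hpn _
    rw [Finset.prod_pow_eq_pow_sum] at h1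
    refine h1.trans ?_
    rw [← Real.rpow_natCast (n : ℝ) (∑ p ∈ L, x.factorization p)]
    refine Real.rpow_le_rpow_of_exponent_le hn1 ?_
    -- sum of exponents bound
    have hsum : (∑ p ∈ L, (x.factorization p : ℝ)) ≤ L.card • ((s : ℝ) * n / T) := by
      refine Finset.sum_le_card_nsmul _ _ _ (fun p hp => ?_)
      have hpmem := Finset.mem_filter.1 hp
      obtain ⟨h2, _, h3⟩ := key p hpmem.1
      have hTp : (T : ℝ) < p := by exact_mod_cast Nat.lt_of_not_le hpmem.2
      have hTpos : (0 : ℝ) < T := by linarith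
      rw [le_div_iff₀ hTpos]
      have he0 : (0:ℝ) ≤ (x.factorization p : ℝ) := Nat.cast_nonneg _
      nlinarith [mul_le_mul_of_nonneg_left (show (T:ℝ) ≤ (p:ℝ) - 1 by
        have h4 : (T:ℝ) + 1 ≤ p := by exact_mod_cast Nat.lt_of_not_le hpmem.2
        linarith) he0]
    rw [nsmul_eq_mul] at hsum
    rw [Nat.cast_sum]
    refine hsum.trans ?_
    have hLcard : (L.card : ℝ) ≤ ω := by
      exact_mod_cast Finset.card_le_card (Finset.filter_subset _ _)
    have hTpos : (0 : ℝ) < T := by linarith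
    have hapos : (0 : ℝ) < a := by exact_mod_cast ha
    have hs1 : (1 : ℝ) ≤ s := by exact_mod_cast hs
    have hωT : (a : ℝ) * ω ≤ (s : ℝ) * T := by
      have hTc : ((a : ℝ) * ω) + 1 = (T : ℝ) := by rw [hT]; push_cast; ring
      nlinarith [mul_le_mul_of_nonneg_right hs1 hTpos.le]
    rw [← mul_div_assoc, div_le_div_iff₀ hTpos hapos]
    have hsn : (0:ℝ) ≤ (s:ℝ) * n := by positivity
    calc (L.card : ℝ) * ((s:ℝ) * n) * a ≤ (ω : ℝ) * ((s:ℝ)*n) * a := by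
          have := mul_le_mul_of_nonneg_right
            (mul_le_mul_of_nonneg_right hLcard hsn) hapos.le
          linarith
      _ = ((a:ℝ) * ω) * ((s:ℝ) * n) := by ring
      _ ≤ ((s:ℝ) * T) * ((s:ℝ) * n) := mul_le_mul_of_nonneg_right hωT hsn
      _ = (s:ℝ)^2 * n * T := by ring
  -- combine
  rw [hsplit]
  have h0 : (0 : ℝ) ≤ ∏ p ∈ S, (p : ℝ) ^ x.factorization p :=
    Finset.prod_nonneg (fun p _ => by positivity)
  have h0' : (0 : ℝ) ≤ ∏ p ∈ L, (p : ℝ) ^ x.factorization p :=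
    Finset.prod_nonneg (fun p _ => by positivity)
  exact mul_le_mul hSbound hLbound h0' (by positivity)
end

section
/- Fix an integer A > 4 and a real ε > 0 with 4^ε < A. Then rad(A^n · lcm(1,...,n))^{1+ε} / (A^n · lcm(1,...,n)) → 0 as n → ∞. -/
open Filter

/-- The radical of a natural number: the product of its distinct prime factors. -/
def rad (m : ℕ) : ℕ := ∏ p ∈ m.primeFactors, p

lemma lcm_Icc_dvd_factorial (n : ℕ) : (Finset.Icc 1 n).lcm id ∣ n.factorial := by
  apply Finset.lcm_dvd
  intro b hb
  simp only [Finset.mem_Icc, id] at hb ⊢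
  exact Nat.dvd_factorial hb.1 hb.2

lemma lcm_Icc_ne_zero (n : ℕ) : (Finset.Icc 1 n).lcm id ≠ 0 := by
  intro h
  have hdvd := lcm_Icc_dvd_factorial n
  rw [h] at hdvd
  exact (Nat.factorial_pos n).ne' (Nat.eq_zero_of_zero_dvd hdvd)

lemma primeFactors_lcm_subset (n : ℕ) :
    ((Finset.Icc 1 n).lcm id).primeFactors ⊆
      Finset.filter Nat.Prime (Finset.range (n + 1)) := by
  intro p hp
  rw [Nat.mem_primeFactors] at hp
  obtain ⟨hp1, hp2, _⟩ := hp
  have : p ≤ n := (Nat.Prime.dvd_factorial hp1).mp (hp2.trans (lcm_Icc_dvd_factorial n))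
  simp [Finset.mem_filter, Finset.mem_range, Nat.lt_succ_iff, this, hp1]

lemma rad_mul_dvd (A n : ℕ) (hA : A ≠ 0) (hn : n ≠ 0) :
    rad (A ^ n * (Finset.Icc 1 n).lcm id) ∣ rad A * primorial n := by
  have hL := lcm_Icc_ne_zero n
  set L := (Finset.Icc 1 n).lcm id with hLdef
  unfold rad primorial
  rw [Nat.primeFactors_mul (pow_ne_zero n hA) hL, Nat.primeFactors_pow A hn]
  set s := A.primeFactors
  set t := L.primeFactors
  have h1 : s ∪ t = s ∪ (t \ s) := by simp
  rw [h1, Finset.prod_union Finset.disjoint_sdiff]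
  exact mul_dvd_mul dvd_rfl
    (Finset.prod_dvd_prod_of_subset _ _ _
      ((Finset.sdiff_subset).trans (primeFactors_lcm_subset n)))

lemma primorial_dvd_lcm (n : ℕ) : primorial n ∣ (Finset.Icc 1 n).lcm id := by
  unfold primorial
  apply Finset.prod_primes_dvd
  · intro p hp
    simp only [Finset.mem_filter] at hp
    exact hp.2.prime
  · intro p hp
    simp only [Finset.mem_filter, Finset.mem_range, Nat.lt_succ_iff] at hp
    exact Finset.dvd_lcm (by simp [Finset.mem_Icc, hp.2.one_lt.le, hp.1])

/-- For `A > 4` and `ε > 0` with `4^ε < A`,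
`rad(A^n·lcm(1,…,n))^{1+ε}/(A^n·lcm(1,…,n)) → 0` as `n → ∞`. -/
theorem rad_pow_mul_lcm_tendsto_zero (A : ℕ) (hA : 4 < A) (ε : ℝ) (hε : 0 < ε)
    (hεA : (4 : ℝ) ^ ε < (A : ℝ)) :
    Tendsto
      (fun n : ℕ =>
        ((rad (A ^ n * (Finset.Icc 1 n).lcm id) : ℝ) ^ (1 + ε)) /
          ((A ^ n * (Finset.Icc 1 n).lcm id : ℕ) : ℝ))
      atTop (nhds 0) := by
  have hA0 : (0:ℝ) < A := by positivity
  have hAne : A ≠ 0 := by omega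
  set r : ℝ := (4:ℝ) ^ ε / A with hr
  have hr0 : 0 ≤ r := by positivity
  have hr1 : r < 1 := (div_lt_one hA0).mpr hεA
  have hgeo : Tendsto (fun n : ℕ => ((rad A : ℝ) ^ (1 + ε)) * r ^ n) atTop (nhds 0) := by
    simpa using (tendsto_pow_atTop_nhds_zero_of_lt_one hr0 hr1).const_mul
      ((rad A : ℝ) ^ (1 + ε))
  apply squeeze_zero_norm' _ hgeo
  filter_upwards [eventually_ge_atTop 1] with n hn
  set L := (Finset.Icc 1 n).lcm id with hLdef
  have hL : L ≠ 0 := lcm_Icc_ne_zero n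
  have hLpos : (0:ℝ) < L := by exact_mod_cast Nat.pos_of_ne_zero hL
  have hP : 0 < primorial n := primorial_pos n
  have hPR : (0:ℝ) < (primorial n : ℝ) := by exact_mod_cast hP
  have hradA : (0:ℝ) ≤ (rad A : ℝ) := by positivity
  have hnum : (rad (A ^ n * L) : ℝ) ≤ (rad A : ℝ) * primorial n := by
    exact_mod_cast Nat.le_of_dvd (Nat.mul_pos (Nat.pos_of_ne_zero (by
      unfold rad; exact Finset.prod_ne_zero_iff.mpr fun p hp =>
        (Nat.prime_of_mem_primeFactors hp).ne_zero)) hP)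
      (rad_mul_dvd A n hAne (by omega))
  have hPL : (primorial n : ℝ) ≤ (L : ℝ) :=
    Nat.cast_le.mpr (Nat.le_of_dvd (Nat.pos_of_ne_zero hL) (primorial_dvd_lcm n))
  have hP4 : (primorial n : ℝ) ≤ (4:ℝ) ^ n := by
    exact_mod_cast primorial_le_4_pow n
  have hε1 : (0:ℝ) ≤ 1 + ε := by linarith
  have hnum2 : (rad (A ^ n * L) : ℝ) ^ (1 + ε) ≤
      ((rad A : ℝ) * primorial n) ^ (1 + ε) :=
    Real.rpow_le_rpow (by positivity) hnum hε1
  have hsplit : ((rad A : ℝ) * primorial n) ^ (1 + ε)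
      = (rad A : ℝ) ^ (1 + ε) * ((primorial n : ℝ) * (primorial n : ℝ) ^ ε) := by
    rw [Real.mul_rpow hradA hPR.le, Real.rpow_add hPR, Real.rpow_one]
  have hPε : (primorial n : ℝ) ^ ε ≤ ((4:ℝ) ^ ε) ^ n := by
    calc (primorial n : ℝ) ^ ε ≤ ((4:ℝ) ^ n) ^ ε :=
          Real.rpow_le_rpow hPR.le hP4 hε.le
      _ = ((4:ℝ) ^ ε) ^ n := by
          rw [← Real.rpow_natCast (4:ℝ) n, ← Real.rpow_natCast ((4:ℝ) ^ ε) n,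
            ← Real.rpow_mul (by norm_num), ← Real.rpow_mul (by norm_num), mul_comm]
  have hden : (A:ℝ) ^ n * (primorial n : ℝ) ≤ ((A ^ n * L : ℕ) : ℝ) := by
    push_cast
    exact mul_le_mul_of_nonneg_left hPL (by positivity)
  have hdenpos : (0:ℝ) < (A:ℝ) ^ n * (primorial n : ℝ) := by positivity
  rw [Real.norm_eq_abs, abs_of_nonneg (by positivity)]
  calc (rad (A ^ n * L) : ℝ) ^ (1 + ε) / ((A ^ n * L : ℕ) : ℝ)
      ≤ ((rad A : ℝ) ^ (1 + ε) * ((primorial n : ℝ) * ((4:ℝ) ^ ε) ^ n)) /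
        ((A:ℝ) ^ n * (primorial n : ℝ)) := by
        apply div_le_div₀ (by positivity) _ hdenpos hden
        calc (rad (A ^ n * L) : ℝ) ^ (1 + ε)
            ≤ (rad A : ℝ) ^ (1 + ε) * ((primorial n : ℝ) * (primorial n : ℝ) ^ ε) :=
              hsplit ▸ hnum2
          _ ≤ _ := by
              apply mul_le_mul_of_nonneg_left _ (by positivity)
              exact mul_le_mul_of_nonneg_left hPε hPR.le
    _ = (rad A : ℝ) ^ (1 + ε) * r ^ n := by
        rw [hr, div_pow]
        field_simp
end

section
/- Let d and r be positive integers with d > r, and fix positive integers A_1,...,A_r. Then the equation x^d = ∏_{i=1}^r A_i^{n_i} · n_i! has only finitely many solutions in positive integers (x, n_1, ..., n_r). -/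
open Finset Nat

/-- For `d > r` and fixed positive integers `A₁,…,A_r`, the equation
`x^d = ∏ Aᵢ^{nᵢ}·nᵢ!` has only finitely many solutions in positive integers. -/
theorem finite_solutions_pow_eq_prod_factorial (d r : ℕ) (hd : 0 < d) (hr : 0 < r)
    (hdr : r < d) (A : Fin r → ℕ) (hA : ∀ i, 0 < A i) :
    {p : ℕ × (Fin r → ℕ) |
      0 < p.1 ∧ (∀ i, 0 < p.2 i) ∧
        p.1 ^ d = ∏ i, A i ^ p.2 i * Nat.factorial (p.2 i)}.Finite := by
  classical
  haveI : Nonempty (Fin r) := ⟨⟨0, hr⟩⟩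
  set S := Finset.univ.sup A with hS
  set M := 2 * S + 4 with hMdef
  set B := (S ^ M * Nat.factorial M) ^ r with hBdef
  have hS1 : 1 ≤ S := by
    have i : Fin r := ⟨0, hr⟩
    exact le_trans (hA i) (Finset.le_sup (Finset.mem_univ i))
  -- Key bound: every solution has all nᵢ ≤ M
  have key : ∀ (x : ℕ) (n : Fin r → ℕ), 0 < x → (∀ i, 0 < n i) →
      x ^ d = ∏ i, A i ^ n i * Nat.factorial (n i) → ∀ i, n i ≤ M := by
    intro x n hx hn heq
    -- pick the index achieving the sup
    obtain ⟨j, -, hj⟩ := Finset.exists_mem_eq_sup Finset.univ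
      (Finset.univ_nonempty) n
    have hmax : ∀ i, n i ≤ n j := fun i => hj ▸ Finset.le_sup (Finset.mem_univ i)
    suffices hnj : n j ≤ M by intro i; exact le_trans (hmax i) hnj
    by_contra hjM
    push_neg at hjM
    set h := n j / 2 with hh
    obtain ⟨q, hq, hq1, hq2⟩ := Nat.exists_prime_lt_and_le_two_mul h (by omega)
    have hqnj : q ≤ n j := by omega
    have hqS : S < q := by omega
    have hq0 : 0 < q := hq.pos
    have hsq : ∀ i, n i < q ^ 2 := by
      intro i
      have h1 : (h + 1) ^ 2 ≤ q ^ 2 := Nat.pow_le_pow_left (by omega) 2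
      have h2 : n j < (h + 1) ^ 2 := by
        have e : (h + 1) ^ 2 = h * h + 2 * h + 1 := by ring
        have hle : n j ≤ 2 * h + 1 := by omega
        have hhh : 1 ≤ h * h := Nat.one_le_iff_ne_zero.2 (Nat.mul_ne_zero (by omega) (by omega))
        linarith
      exact lt_of_le_of_lt (hmax i) (lt_of_lt_of_le h2 h1)
    have hlt2q : ∀ i, n i < 2 * q := fun i => lt_of_le_of_lt (hmax i) (by omega)
    haveI : Fact q.Prime := ⟨hq⟩
    -- valuation of each factorial is at most 1
    have hfact : ∀ i, (Nat.factorial (n i)).factorization q ≤ 1 := by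
      intro i
      rw [Nat.factorization_def _ hq,
        padicValNat_factorial (b := 2) (Nat.log_lt_of_lt_pow (hn i).ne' (hsq i))]
      have : ∑ k ∈ Finset.Ico 1 2, n i / q ^ k = n i / q := by simp
      rw [this]
      have := hlt2q i
      exact Nat.le_of_lt_succ ((Nat.div_lt_iff_lt_mul hq0).2 (by omega))
    -- q does not divide any Aᵢ
    have hAq : ∀ i, (A i).factorization q = 0 := by
      intro i
      refine Nat.factorization_eq_zero_of_not_dvd fun hdvd => ?_
      have := Nat.le_of_dvd (hA i) hdvd
      have : A i ≤ S := Finset.le_sup (Finset.mem_univ i)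
      omega
    -- each factor is nonzero
    have hne : ∀ i : Fin r, A i ^ n i * Nat.factorial (n i) ≠ 0 := fun i =>
      Nat.mul_ne_zero (pow_ne_zero _ (hA i).ne') (Nat.factorial_ne_zero _)
    -- valuation of RHS ≤ r
    have hRHS : (∏ i, A i ^ n i * Nat.factorial (n i)).factorization q ≤ r := by
      rw [Nat.factorization_prod (fun i _ => hne i)]
      have : ∀ i : Fin r, (A i ^ n i * Nat.factorial (n i)).factorization q ≤ 1 := by
        intro i
        rw [Nat.factorization_mul (pow_ne_zero _ (hA i).ne') (Nat.factorial_ne_zero _),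
          Nat.factorization_pow]
        simp only [Finsupp.coe_add, Finsupp.coe_smul, Pi.add_apply, Pi.smul_apply,
          smul_eq_mul, hAq i, Nat.mul_zero, Nat.zero_add]
        exact hfact i
      calc (∑ i, (A i ^ n i * Nat.factorial (n i)).factorization) q
          = ∑ i, (A i ^ n i * Nat.factorial (n i)).factorization q := by
            simp [Finset.sum_apply']
        _ ≤ ∑ _i : Fin r, 1 := Finset.sum_le_sum (fun i _ => this i)
        _ = r := by simp
    -- q divides x
    have hqx : q ∣ x := by
      have h1 : q ∣ Nat.factorial (n j) := Nat.dvd_factorial hq0 hqnj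
      have h2 : Nat.factorial (n j) ∣ A j ^ n j * Nat.factorial (n j) := dvd_mul_left _ _
      have h3 : A j ^ n j * Nat.factorial (n j) ∣ ∏ i, A i ^ n i * Nat.factorial (n i) :=
        Finset.dvd_prod_of_mem _ (Finset.mem_univ j)
      exact hq.dvd_of_dvd_pow (heq ▸ (h1.trans (h2.trans h3)))
    have hxpos : 0 < x.factorization q := hq.factorization_pos_of_dvd hx.ne' hqx
    have hLHS : d ≤ (x ^ d).factorization q := by
      rw [Nat.factorization_pow]
      simpa using Nat.le_mul_of_pos_right d hxpos
    rw [heq] at hLHS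
    omega
  -- Bound on x
  have keyx : ∀ (x : ℕ) (n : Fin r → ℕ), 0 < x → (∀ i, 0 < n i) →
      x ^ d = ∏ i, A i ^ n i * Nat.factorial (n i) → x ≤ B := by
    intro x n hx hn heq
    have hM := key x n hx hn heq
    have hprod : (∏ i, A i ^ n i * Nat.factorial (n i)) ≤ B := by
      rw [hBdef]
      have : ∀ i : Fin r, A i ^ n i * Nat.factorial (n i) ≤ S ^ M * Nat.factorial M := by
        intro i
        have h1 : A i ^ n i ≤ S ^ M :=
          le_trans (Nat.pow_le_pow_left (Finset.le_sup (Finset.mem_univ i)) _)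
            (Nat.pow_le_pow_right hS1 (hM i))
        exact Nat.mul_le_mul h1 (Nat.factorial_le (hM i))
      calc ∏ i, A i ^ n i * Nat.factorial (n i)
          ≤ ∏ _i : Fin r, S ^ M * Nat.factorial M :=
            Finset.prod_le_prod' (fun i _ => this i)
        _ = (S ^ M * Nat.factorial M) ^ r := by simp
    calc x ≤ x ^ d := Nat.le_self_pow hd.ne' x
      _ = _ := heq
      _ ≤ B := hprod
  -- conclude finiteness
  apply Set.Finite.subset (Set.Finite.prod (Set.finite_Iic B)
    (Set.Finite.pi fun _ : Fin r => Set.finite_Iic M))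
  rintro ⟨x, n⟩ ⟨hx, hn, heq⟩
  exact ⟨keyx x n hx hn heq, fun i _ => key x n hx hn heq i⟩
end

section
/- Let d and r be positive integers with d > r, and fix positive integers A_1,...,A_r. Then the equation x^d = ∏_{i=1}^r A_i^{n_i} · (n_i)# has only finitely many solutions in positive integers (x, n_1,...,n_r), where n# denotes the primorial. -/
lemma primorial_factorization_eq (m q : ℕ) (hq : q.Prime) :
    (primorial m).factorization q = if q ≤ m then 1 else 0 := by
  rw [primorial, Nat.factorization_prod
    (fun p hp => (Finset.mem_filter.1 hp).2.ne_zero)]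
  rw [Finsupp.finset_sum_apply]
  have : ∀ p ∈ (Finset.range (m + 1)).filter Nat.Prime,
      (Nat.factorization p) q = if p = q then 1 else 0 := by
    intro p hp
    rw [(Finset.mem_filter.1 hp).2.factorization, Finsupp.single_apply]
  rw [Finset.sum_congr rfl this, Finset.sum_ite_eq' _ q (fun _ => 1)]
  congr 1
  simp only [Finset.mem_filter, Finset.mem_range, Nat.lt_succ_iff, eq_iff_iff]
  exact ⟨fun h => h.1, fun h => ⟨h, hq⟩⟩

lemma primorial_mono' {a b : ℕ} (h : a ≤ b) : primorial a ≤ primorial b := by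
  unfold primorial
  apply Finset.prod_le_prod_of_subset_of_one_le'
  · exact Finset.filter_subset_filter _ (Finset.range_subset_range.2 (by omega))
  · intro p hp _
    exact (Finset.mem_filter.1 hp).2.one_lt.le

/-- For `d > r` and fixed positive integers `A₁,…,A_r`, the equation
`x^d = ∏ Aᵢ^{nᵢ}·(nᵢ)#` has only finitely many solutions in positive integers,
where `n#` is the primorial. -/
theorem finite_solutions_pow_eq_prod_primorial (d r : ℕ) (hd : 0 < d) (hr : 0 < r)
    (hdr : r < d) (A : Fin r → ℕ) (hA : ∀ i, 0 < A i) :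
    {p : ℕ × (Fin r → ℕ) |
      0 < p.1 ∧ (∀ i, 0 < p.2 i) ∧
        p.1 ^ d = ∏ i, A i ^ p.2 i * primorial (p.2 i)}.Finite := by
  -- pick a prime q larger than all A i
  obtain ⟨q, hqge, hq⟩ := Nat.exists_infinite_primes (Finset.univ.sup A + 1)
  have hAq : ∀ i, A i < q := fun i =>
    lt_of_le_of_lt (Finset.le_sup (Finset.mem_univ i)) (by omega)
  -- key claim: in any solution all n i < q
  have key : ∀ p : ℕ × (Fin r → ℕ), 0 < p.1 → (∀ i, 0 < p.2 i) →
      p.1 ^ d = ∏ i, A i ^ p.2 i * primorial (p.2 i) → ∀ i, p.2 i < q := by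
    rintro ⟨x, n⟩ hx hn heq j
    by_contra hj
    push_neg at hj
    have hterm : ∀ i, (A i ^ n i * primorial (n i)).factorization q
        = if q ≤ n i then 1 else 0 := by
      intro i
      rw [Nat.factorization_mul (Nat.pow_pos (hA i)).ne' (primorial_pos _).ne',
        Finsupp.add_apply, Nat.factorization_pow, Finsupp.smul_apply,
        Nat.factorization_eq_zero_of_lt (hAq i), primorial_factorization_eq _ _ hq]
      simp
    have hprod : (∏ i, A i ^ n i * primorial (n i)).factorization q
        = ∑ i, if q ≤ n i then 1 else 0 := by
      rw [Nat.factorization_prod (fun i _ => (Nat.mul_pos (Nat.pow_pos (hA i)) (primorial_pos _)).ne'),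
        Finsupp.finset_sum_apply]
      exact Finset.sum_congr rfl fun i _ => hterm i
    have hle : (∑ i : Fin r, if q ≤ n i then 1 else 0) ≤ r := by
      calc (∑ i : Fin r, if q ≤ n i then 1 else 0)
          ≤ ∑ _i : Fin r, 1 := Finset.sum_le_sum (fun i _ => by split <;> omega)
        _ = r := by simp
    have hge : 1 ≤ ∑ i : Fin r, if q ≤ n i then 1 else 0 := by
      have : (if q ≤ n j then 1 else 0) = 1 := if_pos hj
      calc 1 = if q ≤ n j then 1 else 0 := this.symm
        _ ≤ _ := Finset.single_le_sum (f := fun i => if q ≤ n i then 1 else 0)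
            (fun i _ => Nat.zero_le _) (Finset.mem_univ j)
    have hxd : (x ^ d).factorization q = d * x.factorization q := by
      rw [Nat.factorization_pow, Finsupp.smul_apply, smul_eq_mul]
    rw [heq, hprod] at hxd
    rcases Nat.eq_zero_or_pos (x.factorization q) with h0 | h1
    · rw [h0, Nat.mul_zero] at hxd; omega
    · have : d ≤ ∑ i : Fin r, if q ≤ n i then 1 else 0 := by
        rw [hxd]; exact Nat.le_mul_of_pos_right d h1
      omega
  -- bound on x
  set C := ∏ i : Fin r, A i ^ q * primorial q with hC
  have hsub : {p : ℕ × (Fin r → ℕ) |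
      0 < p.1 ∧ (∀ i, 0 < p.2 i) ∧
        p.1 ^ d = ∏ i, A i ^ p.2 i * primorial (p.2 i)} ⊆
      Set.Iic C ×ˢ Set.pi Set.univ fun _ : Fin r => Set.Iic q := by
    rintro ⟨x, n⟩ ⟨hx, hn, heq⟩
    have hnq : ∀ i, n i < q := key ⟨x, n⟩ hx hn heq
    constructor
    · simp only [Set.mem_Iic]
      calc x ≤ x ^ d := Nat.le_self_pow hd.ne' x
        _ = ∏ i, A i ^ n i * primorial (n i) := heq
        _ ≤ C := Finset.prod_le_prod (fun i _ => Nat.zero_le _)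
            (fun i _ => Nat.mul_le_mul
              (Nat.pow_le_pow_right (hA i) (hnq i).le)
              (primorial_mono' (hnq i).le))
    · intro i _
      exact (hnq i).le
  exact Set.Finite.subset ((Set.finite_Iic C).prod
    (Set.Finite.pi fun _ => Set.finite_Iic q)) hsub
end

section
/- Let u ≥ 1 and r ≥ 1 be integers and fix positive integers A_1,...,A_r. Assume the weak Szpiro conjecture: there exists s > 0 such that for all pairwise coprime nonzero integers A, B, C with A + B = C, |ABC| < rad(ABC)^s. Then the equation ∏_{i=1}^r A_i^{n_i} · n_i! = x² − u² has only finitely many solutions in positive integers (x, n_1,...,n_r). -/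
open scoped Nat

def radInt (m : ℤ) : ℕ := ∏ p ∈ m.natAbs.primeFactors, p

def radN (m : ℕ) : ℕ := ∏ p ∈ m.primeFactors, p

lemma radInt_natCast (m : ℕ) : radInt (m : ℤ) = radN m := by
  simp [radInt, radN]

lemma one_le_radN (m : ℕ) : 1 ≤ radN m :=
  Finset.one_le_prod' fun p hp => (Nat.prime_of_mem_primeFactors hp).one_lt.le

lemma radN_le_of_dvd {a b : ℕ} (h : a ∣ b) (hb : b ≠ 0) : radN a ≤ radN b :=
  Finset.prod_le_prod_of_subset_of_one_le' (Nat.primeFactors_mono h hb)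
    fun p hp _ => (Nat.prime_of_mem_primeFactors hp).one_lt.le

lemma radN_mul_le (a b : ℕ) : radN (a * b) ≤ radN a * radN b := by
  rcases eq_or_ne a 0 with rfl | ha
  · rw [zero_mul]; exact Nat.le_mul_of_pos_right _ (one_le_radN b)
  rcases eq_or_ne b 0 with rfl | hb
  · rw [mul_zero]; exact Nat.le_mul_of_pos_left _ (one_le_radN a)
  unfold radN
  rw [Nat.primeFactors_mul ha hb]
  calc ∏ p ∈ a.primeFactors ∪ b.primeFactors, p
      = ∏ p ∈ a.primeFactors ∪ (b.primeFactors \ a.primeFactors), p := by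
        rw [Finset.union_sdiff_self_eq_union]
    _ = (∏ p ∈ a.primeFactors, p) * ∏ p ∈ b.primeFactors \ a.primeFactors, p :=
        Finset.prod_union Finset.disjoint_sdiff
    _ ≤ (∏ p ∈ a.primeFactors, p) * ∏ p ∈ b.primeFactors, p :=
        Nat.mul_le_mul le_rfl (Finset.prod_le_prod_of_subset_of_one_le' Finset.sdiff_subset
          fun p hp _ => (Nat.prime_of_mem_primeFactors hp).one_lt.le)

lemma radN_prod_le {ι : Type*} (t : Finset ι) (f : ι → ℕ) :
    radN (∏ i ∈ t, f i) ≤ ∏ i ∈ t, radN (f i) := by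
  classical
  induction t using Finset.induction_on with
  | empty => simp [radN]
  | insert _ _ h ih =>
      rw [Finset.prod_insert h, Finset.prod_insert h]
      exact le_trans (radN_mul_le _ _) (Nat.mul_le_mul le_rfl ih)

lemma radN_le_self {m : ℕ} (hm : m ≠ 0) : radN m ≤ m :=
  Nat.le_of_dvd (Nat.pos_of_ne_zero hm) (Nat.prod_primeFactors_dvd m)

lemma radN_pow_le (a k : ℕ) : radN (a ^ k) ≤ radN a := by
  rcases eq_or_ne k 0 with rfl | hk
  · simpa [radN] using one_le_radN a
  · unfold radN; rw [Nat.primeFactors_pow a hk]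

lemma radN_factorial_le (n : ℕ) : radN (n !) ≤ 4 ^ n := by
  calc radN (n !) ≤ primorial n := by
        apply Finset.prod_le_prod_of_subset_of_one_le'
        · intro p hp
          have hpp := Nat.prime_of_mem_primeFactors hp
          simp only [primorial, Finset.mem_filter, Finset.mem_range]
          exact ⟨Nat.lt_succ_of_le ((Nat.Prime.dvd_factorial hpp).mp
            (Nat.dvd_of_mem_primeFactors hp)), hpp⟩
        · intro p hp _
          simp only [primorial, Finset.mem_filter] at hp
          exact hp.2.one_lt.le
    _ ≤ 4 ^ n := primorial_le_4_pow n

lemma radN_two : radN 2 = 2 := by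
  unfold radN
  rw [Nat.Prime.primeFactors Nat.prime_two, Finset.prod_singleton]

set_option maxHeartbeats 1600000 in
/-- Assuming the weak Szpiro conjecture, the equation `∏ Aᵢ^{nᵢ}·nᵢ! = x² − u²`
has only finitely many solutions in positive integers `(x, n₁, …, n_r)`. -/
theorem finite_solutions_prod_factorial_eq_sq_sub_sq
    (u r : ℕ) (hu : 1 ≤ u) (hr : 1 ≤ r) (A : Fin r → ℕ) (hA : ∀ i, 0 < A i)
    (szpiro : ∃ s : ℝ, 0 < s ∧
      ∀ a b c : ℤ, a ≠ 0 → b ≠ 0 → c ≠ 0 →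
        IsCoprime a b → IsCoprime b c → IsCoprime a c → a + b = c →
          (|a * b * c| : ℝ) < (radInt (a * b * c) : ℝ) ^ s) :
    {p : ℕ × (Fin r → ℕ) |
      0 < p.1 ∧ (∀ i, 0 < p.2 i) ∧
        ((∏ i, A i ^ p.2 i * Nat.factorial (p.2 i) : ℕ) : ℤ) =
          (p.1 : ℤ) ^ 2 - (u : ℤ) ^ 2}.Finite := by
  classical
  obtain ⟨s, hs, hsz⟩ := szpiro
  have hNe : Nonempty (Fin r) := ⟨⟨0, hr⟩⟩
  set C : ℕ := ∏ i, A i with hC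
  set Q : ℝ := ((4 : ℝ) ^ s) ^ r with hQ
  set D : ℝ := 4 * (u : ℝ) ^ 2 * (2 * (C : ℝ)) ^ s with hD
  obtain ⟨M₀, hM₀⟩ := Filter.eventually_atTop.mp
    (FloorSemiring.eventually_mul_pow_lt_factorial_sub D Q 0)
  set M : ℕ := max M₀ (2 * u) with hMdef
  -- main bound on the exponents
  have key : ∀ x : ℕ, ∀ nf : Fin r → ℕ, 0 < x → (∀ i, 0 < nf i) →
      ((∏ i, A i ^ nf i * Nat.factorial (nf i) : ℕ) : ℤ) = (x : ℤ) ^ 2 - (u : ℤ) ^ 2 →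
      ∀ i, nf i ≤ M := by
    intro x nf hx hnf heq i₀
    by_contra hcon
    push_neg at hcon
    set N : ℕ := ∏ i, A i ^ nf i * Nat.factorial (nf i) with hNdef
    set n : ℕ := Finset.univ.sup nf with hndef
    obtain ⟨j, -, hj⟩ := Finset.exists_mem_eq_sup Finset.univ Finset.univ_nonempty nf
    have hnM : M < n := lt_of_lt_of_le hcon (Finset.le_sup (Finset.mem_univ i₀))
    have hNpos : 0 < N :=
      Finset.prod_pos fun i _ => Nat.mul_pos (pow_pos (hA i) _) (Nat.factorial_pos _)
    have hfacN : n ! ∣ N := by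
      rw [hndef, hj]
      exact dvd_trans (Dvd.intro_left _ rfl) (Finset.dvd_prod_of_mem _ (Finset.mem_univ j))
    have hfacle : (n ! : ℕ) ≤ N := Nat.le_of_dvd hNpos hfacN
    -- u^2 divides n!
    have hu2 : u ^ 2 * 2 ∣ n ! := by
      have hne : u ≠ 2 * u := by omega
      have hsub : ({u, 2 * u} : Finset ℕ) ⊆ Finset.Ico 1 (n + 1) := by
        intro z hz
        have h2u : 2 * u ≤ n := le_trans (le_max_right _ _) hnM.le
        simp only [Finset.mem_insert, Finset.mem_singleton] at hz
        rcases hz with rfl | rfl <;> simp [Finset.mem_Ico] <;> omega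
      have := Finset.prod_dvd_prod_of_subset _ _ (fun z : ℕ => z) hsub
      rw [Finset.prod_pair hne, Finset.prod_Ico_id_eq_factorial] at this
      calc u ^ 2 * 2 = u * (2 * u) := by ring
        _ ∣ n ! := this
    have hu2N : u ^ 2 ∣ N := dvd_trans (dvd_trans (Dvd.intro 2 rfl) hu2) hfacN
    -- the natural-number form of the equation
    have hx2 : x ^ 2 = N + u ^ 2 := by
      have : ((x ^ 2 : ℕ) : ℤ) = ((N + u ^ 2 : ℕ) : ℤ) := by push_cast; linarith [heq]
      exact_mod_cast this
    have hudvdx : u ∣ x := by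
      have h1 : u ^ 2 ∣ x ^ 2 := by rw [hx2]; exact dvd_add hu2N dvd_rfl
      exact (Nat.pow_dvd_pow_iff two_ne_zero).mp h1
    set y : ℕ := x / u with hydef
    have hxy : x = u * y := (Nat.mul_div_cancel' hudvdx).symm
    have hy2 : 2 ≤ y := by
      by_contra hy
      push_neg at hy
      have hxle : x ≤ u := by
        rw [hxy]
        calc u * y ≤ u * 1 := Nat.mul_le_mul_left u (by omega)
          _ = u := mul_one u
      have h1 : x ^ 2 ≤ u ^ 2 := Nat.pow_le_pow_left hxle 2
      omega
    have hyy : u ^ 2 * y ^ 2 = N + u ^ 2 := by rw [← hx2, hxy]; ring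
    have hNt : N = u ^ 2 * (y ^ 2 - 1) := by
      have h1 : 1 ≤ y ^ 2 := by nlinarith
      rw [Nat.mul_sub, mul_one]
      omega
    -- Szpiro step : N < 4 u² (2 rad N)^s
    have hradpos : (0 : ℝ) ≤ 2 * (radN N : ℝ) := by positivity
    have hNZ : (N : ℤ) = (u : ℤ) ^ 2 * ((y : ℤ) ^ 2 - 1) := by
      have h2 : ((u ^ 2 * y ^ 2 : ℕ) : ℤ) = ((N + u ^ 2 : ℕ) : ℤ) := by exact_mod_cast hyy
      push_cast at h2
      linear_combination -h2
    have hszmain : (N : ℝ) < 4 * (u : ℝ) ^ 2 * (2 * (radN N : ℝ)) ^ s := by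
      have hNR : (N : ℝ) = (u : ℝ) ^ 2 * ((y : ℝ) ^ 2 - 1) := by exact_mod_cast hNZ
      have hyR2 : (2 : ℝ) ≤ (y : ℝ) := by exact_mod_cast hy2
      have hupos : (0 : ℝ) < (u : ℝ) ^ 2 := by
        have : (1 : ℝ) ≤ (u : ℝ) := by exact_mod_cast hu
        positivity
      have hradnn : (0 : ℝ) ≤ 2 * (radN N : ℝ) := by positivity
      have hrpownn : (0 : ℝ) ≤ (2 * (radN N : ℝ)) ^ s := Real.rpow_nonneg hradnn s
      rcases Nat.even_or_odd y with ⟨k, hk⟩ | ⟨k, hk⟩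
      · -- y even : y = k + k
        have hk1 : 1 ≤ k := by omega
        have hk1Z : (1 : ℤ) ≤ (k : ℤ) := by exact_mod_cast hk1
        have h := hsz (2 * (k : ℤ) - 1) 2 (2 * (k : ℤ) + 1) (by omega) two_ne_zero (by omega)
          ⟨-1, (k : ℤ), by ring⟩ ⟨-(k : ℤ), 1, by ring⟩ ⟨-((k : ℤ) + 1), (k : ℤ), by ring⟩
          (by ring)
        have hy2eq : y ^ 2 = 4 * k ^ 2 := by rw [hk]; ring
        have hy21 : 1 ≤ y ^ 2 := by nlinarith
        have hyZ : (y : ℤ) = 2 * (k : ℤ) := by rw [hk]; push_cast; ring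
        have hdvd : (y ^ 2 - 1) ∣ N := ⟨u ^ 2, by rw [hNt]; ring⟩
        have harg : (2 * (k : ℤ) - 1) * 2 * (2 * (k : ℤ) + 1) = ((2 * (y ^ 2 - 1) : ℕ) : ℤ) := by
          rw [Nat.cast_mul, Nat.cast_sub hy21]
          push_cast
          rw [hyZ]; ring
        have hradle : radInt ((2 * (k : ℤ) - 1) * 2 * (2 * (k : ℤ) + 1)) ≤ 2 * radN N := by
          rw [harg, radInt_natCast]
          calc radN (2 * (y ^ 2 - 1)) ≤ radN 2 * radN (y ^ 2 - 1) := radN_mul_le _ _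
            _ ≤ 2 * radN N := by
                rw [radN_two]
                exact Nat.mul_le_mul le_rfl (radN_le_of_dvd hdvd hNpos.ne')
        push_cast at h
        have hkR : (1 : ℝ) ≤ (k : ℝ) := by exact_mod_cast hk1
        have hyR : (y : ℝ) = 2 * (k : ℝ) := by rw [hk]; push_cast; ring
        have habs : |(2 * (k : ℝ) - 1) * 2 * (2 * (k : ℝ) + 1)| = 2 * ((y : ℝ) ^ 2 - 1) := by
          rw [abs_of_nonneg (by nlinarith), hyR]; ring
        rw [habs] at h
        have h3' : ((radInt ((2 * (k : ℤ) - 1) * 2 * (2 * (k : ℤ) + 1)) : ℕ) : ℝ) ^ s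
            ≤ (2 * (radN N : ℝ)) ^ s := by
          apply Real.rpow_le_rpow (Nat.cast_nonneg _) _ hs.le
          exact_mod_cast hradle
        calc (N : ℝ) = (u : ℝ) ^ 2 * ((y : ℝ) ^ 2 - 1) := hNR
          _ ≤ (u : ℝ) ^ 2 * (2 * ((y : ℝ) ^ 2 - 1)) := by nlinarith
          _ < (u : ℝ) ^ 2 * ((radInt ((2 * (k : ℤ) - 1) * 2 * (2 * (k : ℤ) + 1)) : ℝ)) ^ s :=
              mul_lt_mul_of_pos_left h hupos
          _ ≤ (u : ℝ) ^ 2 * (2 * (radN N : ℝ)) ^ s :=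
              mul_le_mul_of_nonneg_left h3' hupos.le
          _ ≤ 4 * (u : ℝ) ^ 2 * (2 * (radN N : ℝ)) ^ s := by nlinarith
      · -- y odd : y = 2k + 1
        have hk1 : 1 ≤ k := by omega
        have hk1Z : (1 : ℤ) ≤ (k : ℤ) := by exact_mod_cast hk1
        have h := hsz (k : ℤ) 1 ((k : ℤ) + 1) (by omega) one_ne_zero (by omega)
          isCoprime_one_right isCoprime_one_left ⟨-1, 1, by ring⟩ (by ring)
        have hyk : y ^ 2 - 1 = 4 * (k * (k + 1)) := by
          have : y ^ 2 = 4 * (k * (k + 1)) + 1 := by rw [hk]; ring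
          omega
        have hNk : N = u ^ 2 * (4 * (k * (k + 1))) := by rw [hNt, hyk]
        have hdvd : (k * (k + 1)) ∣ N := ⟨u ^ 2 * 4, by rw [hNk]; ring⟩
        have harg : (k : ℤ) * 1 * ((k : ℤ) + 1) = ((k * (k + 1) : ℕ) : ℤ) := by
          push_cast; ring
        have hradle : radInt ((k : ℤ) * 1 * ((k : ℤ) + 1)) ≤ 2 * radN N := by
          rw [harg, radInt_natCast]
          calc radN (k * (k + 1)) ≤ radN N := radN_le_of_dvd hdvd hNpos.ne'
            _ ≤ 2 * radN N := by omega
        push_cast at h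
        have hkR : (1 : ℝ) ≤ (k : ℝ) := by exact_mod_cast hk1
        have habs : |(k : ℝ) * 1 * ((k : ℝ) + 1)| = (k : ℝ) * ((k : ℝ) + 1) := by
          rw [abs_of_nonneg (by nlinarith)]; ring
        rw [habs] at h
        have h3' : ((radInt ((k : ℤ) * 1 * ((k : ℤ) + 1)) : ℕ) : ℝ) ^ s
            ≤ (2 * (radN N : ℝ)) ^ s := by
          apply Real.rpow_le_rpow (Nat.cast_nonneg _) _ hs.le
          exact_mod_cast hradle
        have hNR' : (N : ℝ) = 4 * (u : ℝ) ^ 2 * ((k : ℝ) * ((k : ℝ) + 1)) := by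
          rw [hNk]; push_cast; ring
        calc (N : ℝ) = 4 * (u : ℝ) ^ 2 * ((k : ℝ) * ((k : ℝ) + 1)) := hNR'
          _ < 4 * (u : ℝ) ^ 2 * ((radInt ((k : ℤ) * 1 * ((k : ℤ) + 1)) : ℝ)) ^ s :=
              mul_lt_mul_of_pos_left h (by nlinarith)
          _ ≤ 4 * (u : ℝ) ^ 2 * (2 * (radN N : ℝ)) ^ s :=
              mul_le_mul_of_nonneg_left h3' (by nlinarith)
    -- bound on rad N
    have hradN : radN N ≤ C * 4 ^ (r * n) := by
      calc radN N ≤ ∏ i, radN (A i ^ nf i * Nat.factorial (nf i)) := radN_prod_le _ _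
        _ ≤ ∏ i, A i * 4 ^ nf i := by
            apply Finset.prod_le_prod'
            intro i _
            calc radN (A i ^ nf i * Nat.factorial (nf i))
                ≤ radN (A i ^ nf i) * radN (Nat.factorial (nf i)) := radN_mul_le _ _
              _ ≤ A i * 4 ^ nf i :=
                  Nat.mul_le_mul (le_trans (radN_pow_le _ _) (radN_le_self (hA i).ne'))
                    (radN_factorial_le _)
        _ = C * 4 ^ (∑ i, nf i) := by
            rw [Finset.prod_mul_distrib, Finset.prod_pow_eq_pow_sum]
        _ ≤ C * 4 ^ (r * n) := by
            apply Nat.mul_le_mul le_rfl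
            apply Nat.pow_le_pow_right (by norm_num)
            calc ∑ i, nf i ≤ Finset.univ.card • n :=
                  Finset.sum_le_card_nsmul _ _ _ fun i _ => Finset.le_sup (Finset.mem_univ i)
              _ = r * n := by simp [Finset.card_univ]
    -- pass to the real bound
    have hpow4 : ((4 : ℝ) ^ (r * n)) ^ s = ((4 : ℝ) ^ s) ^ (r * n) := by
      rw [← Real.rpow_natCast (4 : ℝ) (r * n), ← Real.rpow_natCast ((4 : ℝ) ^ s) (r * n),
        ← Real.rpow_mul (by norm_num), ← Real.rpow_mul (by norm_num), mul_comm]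
    have h1 : 2 * (radN N : ℝ) ≤ 2 * (C : ℝ) * (4 : ℝ) ^ (r * n) := by
      have : (radN N : ℝ) ≤ (C : ℝ) * (4 : ℝ) ^ (r * n) := by exact_mod_cast hradN
      nlinarith
    have h2 : (2 * (radN N : ℝ)) ^ s ≤ (2 * (C : ℝ) * (4 : ℝ) ^ (r * n)) ^ s :=
      Real.rpow_le_rpow hradpos h1 hs.le
    have h3 : (2 * (C : ℝ) * (4 : ℝ) ^ (r * n)) ^ s = (2 * (C : ℝ)) ^ s * Q ^ n := by
      rw [Real.mul_rpow (by positivity) (by positivity), hpow4, hQ, ← pow_mul]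
    have hmain : (N : ℝ) < D * Q ^ n := by
      have h4 : 4 * (u : ℝ) ^ 2 * (2 * (radN N : ℝ)) ^ s ≤ D * Q ^ n := by
        rw [hD]
        calc 4 * (u : ℝ) ^ 2 * (2 * (radN N : ℝ)) ^ s
            ≤ 4 * (u : ℝ) ^ 2 * ((2 * (C : ℝ)) ^ s * Q ^ n) := by
              rw [← h3]; exact mul_le_mul_of_nonneg_left h2 (by positivity)
          _ = 4 * (u : ℝ) ^ 2 * (2 * (C : ℝ)) ^ s * Q ^ n := by ring
      exact lt_of_lt_of_le hszmain h4
    -- contradiction with the factorial growth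
    have hfin := hM₀ n (le_trans (le_max_left _ _) hnM.le)
    simp only [Nat.sub_zero] at hfin
    have : (n ! : ℝ) ≤ (N : ℝ) := by exact_mod_cast hfacle
    linarith
  -- conclude finiteness
  set B : ℕ := (∏ i, A i ^ M * Nat.factorial M) + u ^ 2 with hB
  apply Set.Finite.subset
    (Set.Finite.prod (Set.finite_Iic B) (Set.Finite.pi fun _ : Fin r => Set.finite_Iic M))
  rintro ⟨x, nf⟩ ⟨hx, hnf, heq⟩
  dsimp only at hx hnf heq ⊢
  have hkey := key x nf hx hnf heq
  set N : ℕ := ∏ i, A i ^ nf i * Nat.factorial (nf i) with hNdef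
  constructor
  · -- x ≤ B
    simp only [Set.mem_Iic]
    have hx2 : x ^ 2 = N + u ^ 2 := by
      have : ((x ^ 2 : ℕ) : ℤ) = ((N + u ^ 2 : ℕ) : ℤ) := by
        push_cast; linarith [heq]
      exact_mod_cast this
    have hle : N ≤ ∏ i, A i ^ M * Nat.factorial M := by
      rw [hNdef]
      apply Finset.prod_le_prod'
      intro i _
      exact Nat.mul_le_mul (Nat.pow_le_pow_right (hA i) (hkey i)) (Nat.factorial_le (hkey i))
    calc x ≤ x ^ 2 := Nat.le_self_pow two_ne_zero x
      _ ≤ B := by rw [hx2, hB]; omega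
  · -- exponents bounded
    intro i _
    exact hkey i
end
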